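/- Let N ≥ 1, let k > −1 and δ be real, and let Γ: ℝ → ℝ be continuous. Let C be the N×N real tridiagonal matrix with all diagonal entries −(1+k), all superdiagonal entries 1, and all subdiagonal entries k, let Ω^δ ∈ ℝ^N be defined by Ω₁ = kΓ(δ), Ωᵢ = 0 for 2 ≤ i ≤ N−1, and Ω_N = Γ(δ), and define E(x) = Σ_{i=1}^N ( ∫₀^{xᵢ} Γ(y) dy − Γ(δ)·xᵢ ). If x: ℝ → ℝ^N is a differentiable solution of ẋ = Ω^δ + CΓ(x) and at time t there exists an index i with Γ(xᵢ(t)) ≠ Γ(δ), then d/dt E(x(t)) < 0. -/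

import Mathlib

open Matrix

/-- The Lyapunov-type functional `E(x) = Σᵢ (∫₀^{xᵢ} Γ(y) dy − Γ(δ)·xᵢ)`. -/
noncomputable def lyapunovE (N : ℕ) (Γ : ℝ → ℝ) (δ : ℝ) (v : Fin N → ℝ) : ℝ :=
  ∑ i, ((∫ y in (0:ℝ)..(v i), Γ y) - Γ δ * v i)

private lemma row_formula {N : ℕ} (k : ℝ)
    (C : Matrix (Fin N) (Fin N) ℝ)
    (hC : ∀ i j : Fin N, C i j =
      if (i : ℕ) = (j : ℕ) then -(1 + k)
      else if (j : ℕ) = (i : ℕ) + 1 then 1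
      else if (i : ℕ) = (j : ℕ) + 1 then k else 0)
    (f : Fin N → ℝ) (F : ℕ → ℝ)
    (hF : ∀ n (h : n < N), F n = f ⟨n, h⟩) (hF0 : ∀ n, N ≤ n → F n = 0)
    (i : Fin N) :
    (C *ᵥ f) i = -(1 + k) * f i + F ((i : ℕ) + 1)
      + (if (i : ℕ) = 0 then 0 else k * F ((i : ℕ) - 1)) := by
  have hsplit : ∀ j : Fin N, C i j * f j =
      (if j = i then -(1 + k) * f j else 0)
      + (if (j : ℕ) = (i : ℕ) + 1 then f j else 0)
      + (if (i : ℕ) = (j : ℕ) + 1 then k * f j else 0) := by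
    intro j
    rw [hC i j]
    simp only [Fin.ext_iff]
    split_ifs <;> (try (exfalso; omega)) <;> ring
  have hmv : (C *ᵥ f) i = ∑ j, C i j * f j := by
    simp [Matrix.mulVec, dotProduct]
  rw [hmv, Finset.sum_congr rfl (fun j _ => hsplit j),
    Finset.sum_add_distrib, Finset.sum_add_distrib]
  have h1 : (∑ j : Fin N, if j = i then -(1 + k) * f j else 0) = -(1 + k) * f i := by
    simp
  have h2 : (∑ j : Fin N, if (j : ℕ) = (i : ℕ) + 1 then f j else 0) = F ((i : ℕ) + 1) := by
    by_cases h : (i : ℕ) + 1 < N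
    · rw [hF _ h]
      rw [Finset.sum_congr rfl (fun j _ => by
        rw [if_congr (show ((j : ℕ) = (i : ℕ) + 1) ↔ (j = ⟨(i : ℕ) + 1, h⟩) by
          simp [Fin.ext_iff]) rfl rfl])]
      simp
    · rw [hF0 _ (by omega)]
      apply Finset.sum_eq_zero
      intro j _
      have hj := j.isLt
      rw [if_neg (by omega)]
  have h3 : (∑ j : Fin N, if (i : ℕ) = (j : ℕ) + 1 then k * f j else 0)
      = (if (i : ℕ) = 0 then 0 else k * F ((i : ℕ) - 1)) := by
    by_cases h0 : (i : ℕ) = 0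
    · rw [if_pos h0]
      apply Finset.sum_eq_zero
      intro j _
      rw [if_neg (by omega)]
    · have hlt : (i : ℕ) - 1 < N := by have := i.isLt; omega
      rw [if_neg h0, hF _ hlt]
      rw [Finset.sum_congr rfl (fun j _ => by
        rw [if_congr (show ((i : ℕ) = (j : ℕ) + 1) ↔ (j = ⟨(i : ℕ) - 1, hlt⟩) by
          simp [Fin.ext_iff]; omega) rfl rfl])]
      simp
  rw [h1, h2, h3]

/-- For `k > −1`, the Lyapunov functional `E` strictly decreases
along a solution of `ẋ = Ω^δ + CΓ(x)` at every time `t` at which some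
component satisfies `Γ(xᵢ(t)) ≠ Γ(δ)`. -/
theorem energy_strictly_decreasing (N : ℕ) (hN : 1 ≤ N) (k δ : ℝ) (hk : -1 < k)
    (Γ : ℝ → ℝ) (hΓ : Continuous Γ)
    (C : Matrix (Fin N) (Fin N) ℝ)
    (hC : ∀ i j : Fin N, C i j =
      if (i : ℕ) = (j : ℕ) then -(1 + k)
      else if (j : ℕ) = (i : ℕ) + 1 then 1
      else if (i : ℕ) = (j : ℕ) + 1 then k else 0)
    (Ω : Fin N → ℝ)
    (hΩ : ∀ i : Fin N, Ω i =
      (if (i : ℕ) = 0 then k * Γ δ else 0) + (if (i : ℕ) = N - 1 then Γ δ else 0))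
    (x : ℝ → Fin N → ℝ)
    (hx : ∀ (t : ℝ) (i : Fin N),
      HasDerivAt (fun s => x s i) (Ω i + (C *ᵥ fun j => Γ (x t j)) i) t)
    (t : ℝ) (i : Fin N) (hi : Γ (x t i) ≠ Γ δ) :
    deriv (fun s => lyapunovE N Γ δ (x s)) t < 0 := by
  classical
  set g : Fin N → ℝ := fun j => Γ (x t j) - Γ δ with hgdef
  set G : ℕ → ℝ := fun n => if h : n < N then g ⟨n, h⟩ else 0 with hGdef
  set H : ℕ → ℝ := fun n => if h : n < N then Γ (x t ⟨n, h⟩) else 0 with hHdef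
  have hGlt : ∀ n (h : n < N), G n = g ⟨n, h⟩ := fun n h => dif_pos h
  have hG0 : ∀ n, N ≤ n → G n = 0 := fun n h => dif_neg (by omega)
  have hHlt : ∀ n (h : n < N), H n = Γ (x t ⟨n, h⟩) := fun n h => dif_pos h
  have hH0 : ∀ n, N ≤ n → H n = 0 := fun n h => dif_neg (by omega)
  -- Step 1: derivative of E along the solution
  have hE : HasDerivAt (fun s => lyapunovE N Γ δ (x s))
      (∑ j, g j * (Ω j + (C *ᵥ fun l => Γ (x t l)) j)) t := by
    have key : ∀ j : Fin N, HasDerivAt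
        (fun s => (∫ y in (0:ℝ)..(x s j), Γ y) - Γ δ * x s j)
        (g j * (Ω j + (C *ᵥ fun l => Γ (x t l)) j)) t := by
      intro j
      have h1 : HasDerivAt (fun u : ℝ => ∫ y in (0:ℝ)..u, Γ y) (Γ (x t j)) (x t j) :=
        intervalIntegral.integral_hasDerivAt_right (hΓ.intervalIntegrable _ _)
          (hΓ.aestronglyMeasurable.stronglyMeasurableAtFilter) hΓ.continuousAt
      have h2 := h1.comp t (hx t j)
      have h3 := (hx t j).const_mul (Γ δ)
      have h4 : HasDerivAt (fun s => (∫ y in (0:ℝ)..(x s j), Γ y) - Γ δ * x s j)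
          (Γ (x t j) * (Ω j + (C *ᵥ fun l => Γ (x t l)) j)
            - Γ δ * (Ω j + (C *ᵥ fun l => Γ (x t l)) j)) t := h2.sub h3
      convert h4 using 1
      show (Γ (x t j) - Γ δ) * _ = _
      ring
    have := HasDerivAt.fun_sum (fun j (_ : j ∈ Finset.univ) => key j)
    simpa [lyapunovE] using this
  rw [hE.deriv]
  -- Step 2: Ω + C Γ(x) = C g componentwise
  have claimA : ∀ j : Fin N, Ω j + (C *ᵥ fun l => Γ (x t l)) j = (C *ᵥ g) j := by
    intro j
    rw [row_formula k C hC _ H hHlt hH0 j, row_formula k C hC g G hGlt hG0 j, hΩ j]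
    have hHG : ∀ n, H n = G n + (if n < N then Γ δ else 0) := by
      intro n
      by_cases h : n < N
      · rw [hHlt n h, hGlt n h, if_pos h, hgdef]; ring
      · rw [hH0 n (by omega), hG0 n (by omega), if_neg h]; ring
    have hjlt := j.isLt
    have hgj : g j = Γ (x t j) - Γ δ := rfl
    rw [hHG ((j : ℕ) + 1), hHG ((j : ℕ) - 1)]
    have hfj : Γ (x t j) = g j + Γ δ := by rw [hgj]; ring
    rw [hfj]
    split_ifs <;> (try (exfalso; omega)) <;> ring
  rw [Finset.sum_congr rfl (fun j _ => by rw [claimA j])]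
  -- Step 3: rewrite as a sum over range N
  have hgG : ∀ j : Fin N, g j = G (j : ℕ) := fun j => by
    rw [hGlt _ j.isLt]
  have hrow : ∀ j : Fin N, (C *ᵥ g) j = -(1 + k) * G (j : ℕ) + G ((j : ℕ) + 1)
      + (if (j : ℕ) = 0 then 0 else k * G ((j : ℕ) - 1)) := by
    intro j
    rw [row_formula k C hC g G hGlt hG0 j, hGlt _ j.isLt]
  have hsum : (∑ j : Fin N, g j * (C *ᵥ g) j)
      = ∑ n ∈ Finset.range N, G n * (-(1 + k) * G n + G (n + 1)
        + (if n = 0 then 0 else k * G (n - 1))) := by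
    rw [Finset.sum_congr rfl (fun j _ => by rw [hgG j, hrow j])]
    exact Fin.sum_univ_eq_sum_range
      (fun n => G n * (-(1 + k) * G n + G (n + 1) + (if n = 0 then 0 else k * G (n - 1)))) N
  rw [hsum]
  -- Step 4: algebraic identity
  obtain ⟨M, hM⟩ : ∃ M, N = M + 1 := ⟨N - 1, by omega⟩
  subst hM
  set Q : ℝ := ∑ n ∈ Finset.range (M + 1), G n ^ 2 with hQ
  set S : ℝ := ∑ n ∈ Finset.range M, G n * G (n + 1) with hS
  have hD : (∑ n ∈ Finset.range (M + 1), G n * (-(1 + k) * G n + G (n + 1)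
      + (if n = 0 then 0 else k * G (n - 1)))) = -(1 + k) * (Q - S) := by
    have e1 : (∑ n ∈ Finset.range (M + 1), G n * (-(1 + k) * G n + G (n + 1)
        + (if n = 0 then 0 else k * G (n - 1))))
        = (∑ n ∈ Finset.range (M + 1), -(1 + k) * G n ^ 2)
          + (∑ n ∈ Finset.range (M + 1), G n * G (n + 1))
          + (∑ n ∈ Finset.range (M + 1), (if n = 0 then 0 else G n * (k * G (n - 1)))) := by
      rw [← Finset.sum_add_distrib, ← Finset.sum_add_distrib]
      apply Finset.sum_congr rfl
      intro n _
      split_ifs <;> ring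
    rw [e1]
    have e2 : (∑ n ∈ Finset.range (M + 1), -(1 + k) * G n ^ 2) = -(1 + k) * Q := by
      rw [hQ, Finset.mul_sum]
    have e3 : (∑ n ∈ Finset.range (M + 1), G n * G (n + 1)) = S := by
      rw [Finset.sum_range_succ, hG0 (M + 1) (by omega), hS]
      ring
    have e4 : (∑ n ∈ Finset.range (M + 1), (if n = 0 then 0 else G n * (k * G (n - 1))))
        = k * S := by
      rw [Finset.sum_range_succ']
      have hz : (if (0:ℕ) = 0 then (0:ℝ) else G 0 * (k * G (0 - 1))) = 0 := by simp
      rw [hz, add_zero, hS, Finset.mul_sum]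
      apply Finset.sum_congr rfl
      intro n _
      rw [if_neg (Nat.succ_ne_zero n), Nat.add_sub_cancel]
      ring
    rw [e2, e3, e4]
    ring
  rw [hD]
  -- Step 5: Q - S > 0
  set T : ℝ := G 0 ^ 2 + G M ^ 2 + ∑ n ∈ Finset.range M, (G n - G (n + 1)) ^ 2 with hT
  have hTQS : T = 2 * (Q - S) := by
    have e5 : (∑ n ∈ Finset.range M, (G n - G (n + 1)) ^ 2)
        = (∑ n ∈ Finset.range M, G n ^ 2) - 2 * S + (∑ n ∈ Finset.range M, G (n + 1) ^ 2) := by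
      rw [hS, Finset.mul_sum, ← Finset.sum_sub_distrib, ← Finset.sum_add_distrib]
      apply Finset.sum_congr rfl
      intro n _
      ring
    have e6 : (∑ n ∈ Finset.range M, G n ^ 2) = Q - G M ^ 2 := by
      rw [hQ, Finset.sum_range_succ]; ring
    have e7 : (∑ n ∈ Finset.range M, G (n + 1) ^ 2) = Q - G 0 ^ 2 := by
      rw [hQ, Finset.sum_range_succ']; ring
    rw [hT, e5, e6, e7]; ring
  have hTnonneg : 0 ≤ T := by
    rw [hT]
    have : 0 ≤ ∑ n ∈ Finset.range M, (G n - G (n + 1)) ^ 2 :=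
      Finset.sum_nonneg (fun n _ => sq_nonneg _)
    positivity
  have hTne : T ≠ 0 := by
    intro hT0
    have hsq : (∑ n ∈ Finset.range M, (G n - G (n + 1)) ^ 2) = 0 := by
      have h1 : 0 ≤ ∑ n ∈ Finset.range M, (G n - G (n + 1)) ^ 2 :=
        Finset.sum_nonneg (fun n _ => sq_nonneg _)
      nlinarith [sq_nonneg (G 0), sq_nonneg (G M)]
    have hG00 : G 0 = 0 := by
      have h1 : 0 ≤ ∑ n ∈ Finset.range M, (G n - G (n + 1)) ^ 2 :=
        Finset.sum_nonneg (fun n _ => sq_nonneg _)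
      nlinarith [sq_nonneg (G 0), sq_nonneg (G M)]
    have hstep : ∀ n ∈ Finset.range M, (G n - G (n + 1)) ^ 2 = 0 := by
      rw [← Finset.sum_eq_zero_iff_of_nonneg (fun n _ => sq_nonneg _)] ; exact hsq
    have hall : ∀ n, n < M + 1 → G n = 0 := by
      intro n
      induction n with
      | zero => intro _; exact hG00
      | succ m ih =>
        intro hm
        have hmem : m ∈ Finset.range M := Finset.mem_range.mpr (by omega)
        have := hstep m hmem
        have h2 : G m - G (m + 1) = 0 := by
          exact pow_eq_zero_iff (by norm_num) |>.mp this
        have h3 := ih (by omega)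
        linarith
    have : g i = 0 := by
      rw [hgG i]
      exact hall (i : ℕ) i.isLt
    rw [hgdef] at this
    simp only [sub_eq_zero] at this
    exact hi this
  have hQS : 0 < Q - S := by
    have : 0 < T := lt_of_le_of_ne hTnonneg (Ne.symm hTne)
    linarith
  have h1k : 0 < 1 + k := by linarith
  nlinarith
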